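/- Define, for H ∈ (1/2, 1), φ(H) := (1/(H·(2H−1)·(2−2H))) · Γ(3/2 − H) / (Γ(H − 1/2) · Γ(2 − 2H)), where Γ is the real Gamma function. Then lim_{H→1⁻} (φ(H) − 1)/(H − 1) = −3 − 2·Γ′(1/2)/Γ(1/2) − 2·γ_EM, where Γ′(1/2) is the derivative of the real Gamma function at 1/2 and γ_EM is the Euler–Mascheroni constant; moreover this limit is strictly greater than −2. -/

import Mathlib

open Filter Real

noncomputable def gAux (H : ℝ) : ℝ :=
  Real.Gamma (3 / 2 - H) /
    (H * (2 * H - 1) * Real.Gamma (H - 1 / 2) * Real.Gamma (3 - 2 * H))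

lemma gAux_one : gAux 1 = 1 := by
  unfold gAux
  norm_num [Real.Gamma_one, Real.Gamma_one_half_eq, Real.sqrt_pos.mpr Real.pi_pos,
    (Real.sqrt_pos.mpr Real.pi_pos).ne']

lemma gAux_hasDerivAt : HasDerivAt gAux (4 * Real.log 2 - 3) 1 := by
  have hsp : (0:ℝ) < √π := Real.sqrt_pos.mpr Real.pi_pos
  set a : ℝ := -√π * (Real.eulerMascheroniConstant + 2 * Real.log 2) with ha
  -- numerator
  have hhalf : HasDerivAt Real.Gamma a ((3:ℝ)/2 - 1) := by
    rw [show (3/2 - 1 : ℝ) = 1/2 by norm_num]; exact Real.hasDerivAt_Gamma_one_half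
  have hhalf' : HasDerivAt Real.Gamma a ((1:ℝ) - 1/2) := by
    rw [show (1 - 1/2 : ℝ) = 1/2 by norm_num]; exact Real.hasDerivAt_Gamma_one_half
  have hone : HasDerivAt Real.Gamma (-Real.eulerMascheroniConstant) ((3:ℝ) - 2*1) := by
    rw [show (3 - 2*1 : ℝ) = 1 by norm_num]; exact Real.hasDerivAt_Gamma_one
  have hN : HasDerivAt (fun H : ℝ => Real.Gamma (3 / 2 - H)) (-a) 1 := by
    have hinner : HasDerivAt (fun H : ℝ => 3 / 2 - H) (-1) 1 := by
      simpa [Pi.sub_def] using (hasDerivAt_const (1:ℝ) (3/2:ℝ)).sub (hasDerivAt_id 1)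
    have := hhalf.comp 1 hinner
    simpa [mul_comm, Function.comp_def] using this
  have hw : HasDerivAt (fun H : ℝ => Real.Gamma (H - 1 / 2)) a 1 := by
    have hinner : HasDerivAt (fun H : ℝ => H - 1 / 2) 1 1 := by
      simpa [Pi.sub_def] using (hasDerivAt_id (1:ℝ)).sub (hasDerivAt_const (1:ℝ) (1/2:ℝ))
    have := hhalf'.comp 1 hinner
    simpa [Function.comp_def] using this
  have hz : HasDerivAt (fun H : ℝ => Real.Gamma (3 - 2 * H)) (2 * Real.eulerMascheroniConstant) 1 := by
    have hinner : HasDerivAt (fun H : ℝ => 3 - 2 * H) (-2) 1 := by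
      simpa [Pi.sub_def] using (hasDerivAt_const (1:ℝ) (3:ℝ)).sub ((hasDerivAt_id (1:ℝ)).const_mul 2)
    have := hone.comp 1 hinner
    simpa [Function.comp_def] using this.congr_deriv (by ring)
  have hu : HasDerivAt (fun H : ℝ => H * (2 * H - 1)) 3 1 := by
    have := (hasDerivAt_id (1:ℝ)).mul (((hasDerivAt_id (1:ℝ)).const_mul 2).sub_const 1)
    simpa [Pi.mul_def] using this.congr_deriv (by norm_num)
  have hD : HasDerivAt (fun H : ℝ => H * (2 * H - 1) * Real.Gamma (H - 1 / 2) * Real.Gamma (3 - 2 * H))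
      (3 * √π + a + √π * (2 * Real.eulerMascheroniConstant)) 1 := by
    have h1 := (hu.mul hw).mul hz
    have e1 : Real.Gamma ((1:ℝ) - 1/2) = √π := by norm_num [Real.Gamma_one_half_eq]
    have e2 : Real.Gamma ((3:ℝ) - 2 * 1) = 1 := by norm_num [Real.Gamma_one]
    refine h1.congr_deriv ?_
    simp only [e1, e2, Pi.mul_apply]
    ring
  have hg := hN.div hD (by
    have e1 : Real.Gamma ((1:ℝ) - 1/2) = √π := by norm_num [Real.Gamma_one_half_eq]
    have e2 : Real.Gamma ((3:ℝ) - 2 * 1) = 1 := by norm_num [Real.Gamma_one]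
    simp only [e1, e2]
    positivity)
  have e1 : Real.Gamma ((1:ℝ) - 1/2) = √π := by norm_num [Real.Gamma_one_half_eq]
  have e2 : Real.Gamma ((3:ℝ) - 2 * 1) = 1 := by norm_num [Real.Gamma_one]
  refine hg.congr_deriv ?_
  simp only [e1, e2, show ((3:ℝ)/2 - 1) = 1/2 from by norm_num, Real.Gamma_one_half_eq, ha]
  field_simp
  ring

theorem phi_one_sided_derivative_at_one :
    Filter.Tendsto
        (fun H : ℝ =>
          ((1 / (H * (2 * H - 1) * (2 - 2 * H))) * Real.Gamma (3 / 2 - H)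
              / (Real.Gamma (H - 1 / 2) * Real.Gamma (2 - 2 * H)) - 1)
            / (H - 1))
        (nhdsWithin 1 (Set.Ioo (1 / 2 : ℝ) 1))
        (nhds (-3 - 2 * (deriv Real.Gamma (1 / 2)) / Real.Gamma (1 / 2)
          - 2 * Real.eulerMascheroniConstant)) ∧
      (-2 : ℝ) < -3 - 2 * (deriv Real.Gamma (1 / 2)) / Real.Gamma (1 / 2)
          - 2 * Real.eulerMascheroniConstant := by
  have hsp : (0:ℝ) < √π := Real.sqrt_pos.mpr Real.pi_pos
  have hderiv : deriv Real.Gamma (1/2 : ℝ) = -√π * (Real.eulerMascheroniConstant + 2 * Real.log 2) :=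
    Real.hasDerivAt_Gamma_one_half.deriv
  have hval : -3 - 2 * (deriv Real.Gamma (1 / 2)) / Real.Gamma (1 / 2)
      - 2 * Real.eulerMascheroniConstant = 4 * Real.log 2 - 3 := by
    rw [hderiv, Real.Gamma_one_half_eq]
    field_simp
    ring
  constructor
  · rw [hval]
    have hslope := hasDerivAt_iff_tendsto_slope.mp gAux_hasDerivAt
    have hmono : nhdsWithin (1:ℝ) (Set.Ioo (1/2 : ℝ) 1) ≤ nhdsWithin 1 {(1:ℝ)}ᶜ :=
      nhdsWithin_mono _ (fun x hx => ne_of_lt hx.2)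
    refine Tendsto.congr' ?_ (hslope.mono_left hmono)
    filter_upwards [self_mem_nhdsWithin] with H hH
    have hH1 : H ≠ 1 := ne_of_lt hH.2
    have h2H : (2 - 2 * H) ≠ 0 := by intro h; apply hH1; linarith [eq_of_sub_eq_zero h]
    have hGadd : Real.Gamma (3 - 2 * H) = (2 - 2 * H) * Real.Gamma (2 - 2 * H) := by
      have := Real.Gamma_add_one h2H
      rw [show (2 - 2*H) + 1 = 3 - 2*H by ring] at this
      exact this
    have hA : Real.Gamma (H - 1/2) ≠ 0 := (Real.Gamma_pos_of_pos (by linarith [hH.1])).ne'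
    have hB : Real.Gamma (2 - 2*H) ≠ 0 := (Real.Gamma_pos_of_pos (by linarith [hH.2])).ne'
    have hH0 : H ≠ 0 := by linarith [hH.1]
    have h2H1 : 2*H - 1 ≠ 0 := by have := hH.1; intro h; nlinarith
    rw [slope_def_field, gAux_one]
    unfold gAux
    rw [hGadd]
    field_simp
  · rw [hval]
    have h2 : Real.log 2 > 0.6931471803 := Real.log_two_gt_d9
    linarith
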